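/- Let h ∈ ℝ^N with block structure of n blocks of length d, let T₀ index the k blocks of h with largest ℓ₂ norm, and decompose T₀^c into disjoint sets T₁, T₂, … each of size ak (a > 1 integer), sorted so that T_j contains the blocks of largest ℓ₂ norm among those not in T₀ ∪ T₁ ∪ ⋯ ∪ T_{j-1}. Then for 0 < p ≤ 1: ‖h_{(T₀∪T₁)^c}‖_2^p ≤ (ak)^{p/2-1} ‖h_{T₀^c}‖_{2,p}^p. -/

import Mathlib

open NNReal

private lemma rpow_add_le_add_rpow_real {x y q : ℝ} (hx : 0 ≤ x) (hy : 0 ≤ y)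
    (hq0 : 0 ≤ q) (hq1 : q ≤ 1) : (x + y) ^ q ≤ x ^ q + y ^ q := by
  have h1 := NNReal.rpow_add_le_add_rpow x.toNNReal y.toNNReal hq0 hq1
  calc (x + y) ^ q = ((x.toNNReal + y.toNNReal : ℝ≥0) : ℝ) ^ q := by
        rw [NNReal.coe_add, Real.coe_toNNReal _ hx, Real.coe_toNNReal _ hy]
    _ = (((x.toNNReal + y.toNNReal) ^ q : ℝ≥0) : ℝ) := by rw [NNReal.coe_rpow]
    _ ≤ ((x.toNNReal ^ q + y.toNNReal ^ q : ℝ≥0) : ℝ) := by exact_mod_cast h1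
    _ = x ^ q + y ^ q := by
        rw [NNReal.coe_add, NNReal.coe_rpow, NNReal.coe_rpow,
          Real.coe_toNNReal _ hx, Real.coe_toNNReal _ hy]

private lemma rpow_sum_le_sum_rpow {ι : Type*} (s : Finset ι) (f : ι → ℝ)
    (hf : ∀ i ∈ s, 0 ≤ f i) {q : ℝ} (hq : 0 < q) (hq1 : q ≤ 1) :
    (∑ i ∈ s, f i) ^ q ≤ ∑ i ∈ s, f i ^ q := by
  classical
  induction s using Finset.induction_on with
  | empty => simp [Real.zero_rpow hq.ne']
  | insert a s hnot ih =>
    have hfa : 0 ≤ f a := hf a (Finset.mem_insert_self a s)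
    have hfs : ∀ i ∈ s, 0 ≤ f i := fun i hi => hf i (Finset.mem_insert_of_mem hi)
    have hsum : 0 ≤ ∑ i ∈ s, f i := Finset.sum_nonneg hfs
    rw [Finset.sum_insert hnot, Finset.sum_insert hnot]
    calc (f a + ∑ i ∈ s, f i) ^ q ≤ f a ^ q + (∑ i ∈ s, f i) ^ q :=
          rpow_add_le_add_rpow_real hfa hsum hq.le hq1
      _ ≤ f a ^ q + ∑ i ∈ s, f i ^ q := by linarith [ih hfs]

/-- For a greedy decomposition of the blocks of `h` into `G 0` (the `k` largest
blocks) and groups `G j`, `j ≥ 1`, of `a*k` blocks each (sorted by decreasing block ℓ₂-norm,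
possibly a smaller last group), one has
`‖h_{(G₀∪G₁)ᶜ}‖₂^p ≤ (ak)^(p/2-1) ‖h_{G₀ᶜ}‖_{2,p}^p` for `0 < p ≤ 1`. -/
theorem block_decomposition_tail_bound (n d k a : ℕ) (p : ℝ) (hp : 0 < p) (hp1 : p ≤ 1)
    (hk : 0 < k) (ha : 1 < a)
    (h : Fin n → EuclideanSpace ℝ (Fin d)) (G : ℕ → Finset (Fin n))
    (hG0 : (G 0).card = k)
    (hdisj : ∀ i j, i ≠ j → Disjoint (G i) (G j))
    (hcover : ∀ i : Fin n, ∃ j, i ∈ G j)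
    (hcard : ∀ j, 1 ≤ j → (G j).card ≤ a * k)
    (hfull : ∀ j, 1 ≤ j → (G (j + 1)).Nonempty → (G j).card = a * k)
    (hsort : ∀ j, ∀ i ∈ G (j + 1), ∀ i' ∈ G j, ‖h i‖ ≤ ‖h i'‖) :
    Real.sqrt (∑ i ∈ (G 0 ∪ G 1)ᶜ, ‖h i‖ ^ 2) ^ p ≤
      ((a : ℝ) * k) ^ (p / 2 - 1) * ∑ i ∈ (G 0)ᶜ, ‖h i‖ ^ p := by
  classical
  have hak : (0 : ℝ) < (a : ℝ) * k := by positivity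
  have hakpos : 0 < a * k := Nat.mul_pos (by omega) hk
  set J : ℕ := n + 2 with hJ
  -- down-propagation of nonemptiness
  have hne : ∀ t m, 1 ≤ m → (G (m + t)).Nonempty → (G m).Nonempty := by
    intro t
    induction t with
    | zero => intro m _ hm; simpa using hm
    | succ t ih =>
      intro m hm hmt
      have h1 : 1 ≤ m + t := by omega
      have : (G (m + t)).card = a * k := by
        apply hfull (m + t) h1
        exact hmt
      exact ih m hm (Finset.card_pos.mp (by rw [this]; exact hakpos))
  -- the complement is the union of G j for 2 ≤ j < J
  have hCsub : (G 0 ∪ G 1)ᶜ = (Finset.Ico 2 J).biUnion G := by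
    ext i
    simp only [Finset.mem_compl, Finset.mem_union, Finset.mem_biUnion, Finset.mem_Ico]
    constructor
    · rintro hi
      obtain ⟨j, hj⟩ := hcover i
      have hj0 : j ≠ 0 := by rintro rfl; exact hi (Or.inl hj)
      have hj1 : j ≠ 1 := by rintro rfl; exact hi (Or.inr hj)
      refine ⟨j, ⟨by omega, ?_⟩, hj⟩
      -- all G m, 1 ≤ m < j, are nonempty; so j - 1 ≤ n
      by_contra hbig
      push_neg at hbig
      have hnej : ∀ m ∈ Finset.Ico 1 j, (G m).Nonempty := by
        intro m hm
        rw [Finset.mem_Ico] at hm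
        exact hne (j - m) m hm.1 (by rw [Nat.add_sub_cancel' hm.2.le]; exact ⟨i, hj⟩)
      have hdisjU : (↑(Finset.Ico 1 j) : Set ℕ).PairwiseDisjoint G :=
        fun x _ y _ hxy => hdisj x y hxy
      have hcardU : ((Finset.Ico 1 j).biUnion G).card = ∑ m ∈ Finset.Ico 1 j, (G m).card :=
        Finset.card_biUnion (fun x hx y hy hxy => hdisj x y hxy)
      have hle : ∑ m ∈ Finset.Ico 1 j, (G m).card ≤ n := by
        rw [← hcardU]
        simpa using (Finset.card_le_univ ((Finset.Ico 1 j).biUnion G))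
      have hge : (Finset.Ico 1 j).card ≤ ∑ m ∈ Finset.Ico 1 j, (G m).card := by
        calc (Finset.Ico 1 j).card = ∑ m ∈ Finset.Ico 1 j, 1 := by simp
          _ ≤ ∑ m ∈ Finset.Ico 1 j, (G m).card :=
            Finset.sum_le_sum fun m hm => Finset.card_pos.mpr (hnej m hm)
      rw [Nat.card_Ico] at hge
      omega
    · rintro ⟨j, ⟨hj2, _⟩, hj⟩
      rintro (h0 | h1)
      · exact Finset.disjoint_left.mp (hdisj 0 j (by omega)) h0 hj
      · exact Finset.disjoint_left.mp (hdisj 1 j (by omega)) h1 hj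
  have hsplit : ∑ i ∈ (G 0 ∪ G 1)ᶜ, ‖h i‖ ^ 2 =
      ∑ j ∈ Finset.Ico 2 J, ∑ i ∈ G j, ‖h i‖ ^ 2 := by
    rw [hCsub]
    exact Finset.sum_biUnion (fun x hx y hy hxy => hdisj x y hxy)
  have hnn2 : ∀ j, (0 : ℝ) ≤ ∑ i ∈ G j, ‖h i‖ ^ 2 :=
    fun j => Finset.sum_nonneg fun i _ => by positivity
  -- rewrite sqrt ^ p as ^ (p/2)
  have hsq : Real.sqrt (∑ i ∈ (G 0 ∪ G 1)ᶜ, ‖h i‖ ^ 2) ^ p =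
      (∑ i ∈ (G 0 ∪ G 1)ᶜ, ‖h i‖ ^ 2) ^ (p / 2) := by
    have hx : (0 : ℝ) ≤ ∑ i ∈ (G 0 ∪ G 1)ᶜ, ‖h i‖ ^ 2 :=
      Finset.sum_nonneg fun i _ => by positivity
    rw [Real.sqrt_eq_rpow, ← Real.rpow_mul hx, show 1 / 2 * p = p / 2 by ring]
  rw [hsq, hsplit]
  have hp2 : 0 < p / 2 := by linarith
  have hp21 : p / 2 ≤ 1 := by linarith
  -- subadditivity
  have step1 : (∑ j ∈ Finset.Ico 2 J, ∑ i ∈ G j, ‖h i‖ ^ 2) ^ (p / 2) ≤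
      ∑ j ∈ Finset.Ico 2 J, (∑ i ∈ G j, ‖h i‖ ^ 2) ^ (p / 2) :=
    rpow_sum_le_sum_rpow _ _ (fun j _ => hnn2 j) hp2 hp21
  -- per-group bound
  have step2 : ∀ j ∈ Finset.Ico 2 J, (∑ i ∈ G j, ‖h i‖ ^ 2) ^ (p / 2) ≤
      ((a : ℝ) * k) ^ (p / 2 - 1) * ∑ i ∈ G (j - 1), ‖h i‖ ^ p := by
    intro j hj
    rw [Finset.mem_Ico] at hj
    obtain ⟨m, rfl⟩ : ∃ m, j = m + 2 := ⟨j - 2, by omega⟩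
    have hmj : m + 2 - 1 = m + 1 := by omega
    rw [hmj]
    rcases Finset.eq_empty_or_nonempty (G (m + 2)) with he | hne'
    · rw [he]
      simp only [Finset.sum_empty]
      rw [Real.zero_rpow hp2.ne']
      positivity
    · -- G (m+1) is full
      have hfullm : (G (m + 1)).card = a * k := hfull (m + 1) (by omega) hne'
      -- max element of G (m+2)
      obtain ⟨i₀, hi₀, hmax⟩ := Finset.exists_max_image (G (m + 2)) (fun i => ‖h i‖) hne'
      have hM : 0 ≤ ‖h i₀‖ := norm_nonneg _
      have hbound1 : (∑ i ∈ G (m + 2), ‖h i‖ ^ 2) ≤ ((a : ℝ) * k) * ‖h i₀‖ ^ 2 := by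
        calc ∑ i ∈ G (m + 2), ‖h i‖ ^ 2 ≤ ∑ _i ∈ G (m + 2), ‖h i₀‖ ^ 2 :=
              Finset.sum_le_sum fun i hi =>
                pow_le_pow_left₀ (norm_nonneg _) (hmax i hi) 2
          _ = ((G (m + 2)).card : ℝ) * ‖h i₀‖ ^ 2 := by
              rw [Finset.sum_const, nsmul_eq_mul]
          _ ≤ ((a : ℝ) * k) * ‖h i₀‖ ^ 2 := by
              apply mul_le_mul_of_nonneg_right _ (by positivity)
              exact_mod_cast hcard (m + 2) (by omega)
      have hbound2 : ((a : ℝ) * k) * ‖h i₀‖ ^ p ≤ ∑ i ∈ G (m + 1), ‖h i‖ ^ p := by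
        calc ((a : ℝ) * k) * ‖h i₀‖ ^ p = ∑ _i ∈ G (m + 1), ‖h i₀‖ ^ p := by
              rw [Finset.sum_const, nsmul_eq_mul, hfullm]; push_cast; ring
          _ ≤ ∑ i ∈ G (m + 1), ‖h i‖ ^ p :=
              Finset.sum_le_sum fun i hi =>
                Real.rpow_le_rpow hM (hsort (m + 1) i₀ hi₀ i hi) hp.le
      calc (∑ i ∈ G (m + 2), ‖h i‖ ^ 2) ^ (p / 2)
          ≤ (((a : ℝ) * k) * ‖h i₀‖ ^ 2) ^ (p / 2) :=
            Real.rpow_le_rpow (hnn2 _) hbound1 hp2.le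
        _ = ((a : ℝ) * k) ^ (p / 2) * ‖h i₀‖ ^ p := by
            rw [Real.mul_rpow hak.le (by positivity), ← Real.rpow_natCast ‖h i₀‖ 2,
              ← Real.rpow_mul hM, show ((2:ℕ):ℝ) * (p / 2) = p by push_cast; ring]
        _ = ((a : ℝ) * k) ^ (p / 2 - 1) * (((a : ℝ) * k) * ‖h i₀‖ ^ p) := by
            rw [show p / 2 = p / 2 - 1 + 1 by ring, Real.rpow_add hak, Real.rpow_one]
            ring
        _ ≤ ((a : ℝ) * k) ^ (p / 2 - 1) * ∑ i ∈ G (m + 1), ‖h i‖ ^ p :=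
            mul_le_mul_of_nonneg_left hbound2 (by positivity)
  have step3 : ∑ j ∈ Finset.Ico 2 J, ∑ i ∈ G (j - 1), ‖h i‖ ^ p ≤
      ∑ i ∈ (G 0)ᶜ, ‖h i‖ ^ p := by
    have hre : ∑ j ∈ Finset.Ico 2 J, ∑ i ∈ G (j - 1), ‖h i‖ ^ p =
        ∑ j ∈ Finset.Ico 1 (J - 1), ∑ i ∈ G j, ‖h i‖ ^ p := by
      rw [Finset.sum_Ico_eq_sum_range, Finset.sum_Ico_eq_sum_range]
      apply Finset.sum_congr (by norm_num [hJ])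
      intro x _
      rw [show 2 + x - 1 = 1 + x from by omega]
    rw [hre]
    have hUsub : (Finset.Ico 1 (J - 1)).biUnion G ⊆ (G 0)ᶜ := by
      intro i hi
      rw [Finset.mem_biUnion] at hi
      obtain ⟨j, hj, hij⟩ := hi
      rw [Finset.mem_Ico] at hj
      rw [Finset.mem_compl]
      exact fun h0 => Finset.disjoint_left.mp (hdisj 0 j (by omega)) h0 hij
    calc ∑ j ∈ Finset.Ico 1 (J - 1), ∑ i ∈ G j, ‖h i‖ ^ p
        = ∑ i ∈ (Finset.Ico 1 (J - 1)).biUnion G, ‖h i‖ ^ p :=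
          (Finset.sum_biUnion (fun x hx y hy hxy => hdisj x y hxy)).symm
      _ ≤ ∑ i ∈ (G 0)ᶜ, ‖h i‖ ^ p :=
          Finset.sum_le_sum_of_subset_of_nonneg hUsub fun i _ _ => by positivity
  calc (∑ j ∈ Finset.Ico 2 J, ∑ i ∈ G j, ‖h i‖ ^ 2) ^ (p / 2)
      ≤ ∑ j ∈ Finset.Ico 2 J, (∑ i ∈ G j, ‖h i‖ ^ 2) ^ (p / 2) := step1
    _ ≤ ∑ j ∈ Finset.Ico 2 J, ((a : ℝ) * k) ^ (p / 2 - 1) * ∑ i ∈ G (j - 1), ‖h i‖ ^ p :=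
        Finset.sum_le_sum step2
    _ = ((a : ℝ) * k) ^ (p / 2 - 1) * ∑ j ∈ Finset.Ico 2 J, ∑ i ∈ G (j - 1), ‖h i‖ ^ p := by
        rw [Finset.mul_sum]
    _ ≤ ((a : ℝ) * k) ^ (p / 2 - 1) * ∑ i ∈ (G 0)ᶜ, ‖h i‖ ^ p :=
        mul_le_mul_of_nonneg_left step3 (by positivity)
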